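/- Let (X,T) be a dynamical system. The collection Δ-WM(X,T) of all Δ-weakly mixing subsets of X equals ⋂_{m=1}^∞ A_m(X,T), and in particular Δ-WM(X,T) is a G_δ subset of the hyperspace 2^X. -/

import Mathlib

open TopologicalSpace

/-- `A` is a Δ-weakly mixing set for `T`. -/
def DeltaWM {X : Type*} [TopologicalSpace X] (T : X → X) (A : Set X) : Prop :=
  A.Nontrivial ∧ ∀ n d : ℕ, 2 ≤ n → 2 ≤ d → ∀ U : Fin n → Fin d → Set X,
    (∀ i j, IsOpen (U i j)) → (∀ i j, (U i j ∩ A).Nonempty) →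
    ∃ m : ℕ, 1 ≤ m ∧ ∀ i : Fin n, ∃ x ∈ A, ∀ j : Fin d, T^[j.val * m] x ∈ U i j

/-- The set `A_m(X,T)`. -/
def Am {X : Type*} [MetricSpace X] (T : X → X) (m : ℕ) : Set (NonemptyCompacts X) :=
  {E | (E : Set X).Nontrivial ∧ ∃ k : ℕ, 2 ≤ k ∧ ∃ W : Fin k → Set X,
    (∀ i, IsOpen (W i)) ∧ (∀ i, Metric.diam (W i) < 1 / (m : ℝ)) ∧
    (E : Set X) ⊆ ⋃ i, W i ∧
    ∃ n : ℕ, 1 ≤ n ∧ ∀ α : Fin k → Fin k,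
      ∃ x ∈ (E : Set X), ∀ j : Fin k, T^[j.val * n] x ∈ W (α j)}

section Aux

variable {X : Type*} [MetricSpace X] [CompactSpace X] (T : X → X)

lemma bounded_all (s : Set X) : Bornology.IsBounded s :=
  isCompact_univ.isBounded.subset (Set.subset_univ s)

/-- Forward direction: a Δ-weakly mixing set belongs to every `Am`. -/
lemma deltaWM_mem_Am (E : NonemptyCompacts X) (h : DeltaWM T (E : Set X))
    (m : ℕ) (hm : 1 ≤ m) : E ∈ Am T m := by
  obtain ⟨hnt, hmix⟩ := h
  have hmR : (0:ℝ) < m := by exact_mod_cast hm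
  set r : ℝ := 1 / (4 * m) with hr_def
  have hr : 0 < r := by positivity
  -- finite subcover of E by balls of radius r centered in E
  obtain ⟨t, htE, hcov⟩ := E.isCompact.elim_nhds_subcover (fun x => Metric.ball x r)
    (fun x _ => Metric.ball_mem_nhds x hr)
  obtain ⟨x₀, hx₀⟩ := E.nonempty
  set l : List X := x₀ :: x₀ :: t.toList with hl_def
  set k : ℕ := l.length with hk_def
  have hk2 : 2 ≤ k := by simp [hk_def, hl_def]
  have hlE : ∀ i : Fin k, l.get i ∈ (E : Set X) := by
    intro i
    have : l.get i ∈ l := by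
      have := List.get_mem l i
      simpa using this
    simp only [hl_def, List.mem_cons] at this
    rcases this with h | h | h
    · rw [h]; exact hx₀
    · rw [h]; exact hx₀
    · exact htE _ (Finset.mem_toList.mp h)
  set W : Fin k → Set X := fun i => Metric.ball (l.get i) r with hW_def
  have hWo : ∀ i, IsOpen (W i) := fun i => Metric.isOpen_ball
  have hWd : ∀ i, Metric.diam (W i) < 1 / (m : ℝ) := by
    intro i
    have h1 : Metric.diam (W i) ≤ 2 * r := Metric.diam_ball hr.le
    have h2 : 2 * r < 1 / (m : ℝ) := by
      rw [hr_def, show (2:ℝ) * (1/(4*(m:ℝ))) = 1/(2*m) by ring]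
      exact one_div_lt_one_div_of_lt hmR (by linarith)
    linarith
  have hWcov : (E : Set X) ⊆ ⋃ i, W i := by
    intro y hy
    obtain ⟨x, hxt, hyx⟩ := Set.mem_iUnion₂.mp (hcov hy)
    have hxl : x ∈ l := by simp [hl_def, Finset.mem_toList.mpr hxt]
    obtain ⟨i, hi⟩ := List.get_of_mem hxl
    exact Set.mem_iUnion.mpr ⟨i, show y ∈ Metric.ball (l.get i) r by rw [hi]; exact hyx⟩
  -- apply the mixing property to the family of all α's
  haveI : Nonempty (Fin k) := ⟨⟨0, by omega⟩⟩
  set N : ℕ := Fintype.card (Fin k → Fin k) with hN_def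
  set e : (Fin k → Fin k) ≃ Fin N := Fintype.equivFin _ with he_def
  have hN2 : 2 ≤ N := by
    have hnt' : Nontrivial (Fin k → Fin k) := by
      refine ⟨fun _ => ⟨0, by omega⟩, fun _ => ⟨1, by omega⟩, ?_⟩
      intro hcon
      have := congrFun hcon ⟨0, by omega⟩
      simp at this
    have := Fintype.one_lt_card_iff_nontrivial.mpr hnt'
    omega
  obtain ⟨m', hm'1, hx⟩ := hmix N k hN2 hk2 (fun i j => W (e.symm i j))
    (fun i j => hWo _)
    (fun i j => ⟨l.get (e.symm i j), Metric.mem_ball_self hr, hlE _⟩)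
  refine ⟨hnt, k, hk2, W, hWo, hWd, hWcov, m', hm'1, fun α => ?_⟩
  obtain ⟨x, hxE, hxj⟩ := hx (e α)
  exact ⟨x, hxE, fun j => by simpa using hxj j⟩

/-- A set belonging to all `Am` is infinite. -/
lemma infinite_of_mem_Am (E : NonemptyCompacts X)
    (h : ∀ m : ℕ, 1 ≤ m → E ∈ Am T m) : (E : Set X).Infinite := by
  classical
  intro hfin
  obtain ⟨a, haE, b, hbE, hab⟩ := (h 1 le_rfl).1
  set F := hfin.toFinset with hF_def
  set P := (F ×ˢ F).filter (fun pq => pq.1 ≠ pq.2) with hP_def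
  have hP : P.Nonempty := ⟨(a, b), by
    simp [hP_def, hF_def, Finset.mem_filter, hfin.mem_toFinset, haE, hbE, hab]⟩
  set δ : ℝ := P.inf' hP (fun pq => dist pq.1 pq.2) with hδ_def
  have hδpos : 0 < δ := by
    rw [hδ_def, Finset.lt_inf'_iff]
    intro pq hpq
    simp only [hP_def, Finset.mem_filter] at hpq
    exact dist_pos.mpr hpq.2
  have hδle : ∀ p ∈ (E : Set X), ∀ q ∈ (E : Set X), p ≠ q → δ ≤ dist p q := by
    intro p hp q hq hpq
    exact Finset.inf'_le (fun pq => dist pq.1 pq.2)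
      (show (p, q) ∈ P by
        simp [hP_def, hF_def, Finset.mem_filter, hfin.mem_toFinset, hp, hq, hpq])
  obtain ⟨m, hm⟩ := exists_nat_gt (2 / δ)
  have hm1 : 1 ≤ m := Nat.cast_pos.mp (lt_trans (by positivity) hm)
  have hmR : (0:ℝ) < m := by exact_mod_cast hm1
  have h2δ : 2 < (m:ℝ) * δ := by
    rw [div_lt_iff₀ hδpos] at hm; linarith
  have h1m : 2 / (m:ℝ) < δ := by
    rw [div_lt_iff₀ hmR]; linarith
  obtain ⟨hnt, k, hk2, W, hWo, hWd, hcov, n', hn'1, hα⟩ := h m hm1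
  have huniq : ∀ (i : Fin k) (p q : X), p ∈ (E : Set X) → q ∈ (E : Set X) →
      p ∈ W i → q ∈ W i → p = q := by
    intro i p q hp hq hpW hqW
    by_contra hpq
    have h1 : dist p q ≤ Metric.diam (W i) :=
      Metric.dist_le_diam_of_mem (bounded_all _) hpW hqW
    have h2 := hδle p hp q hq hpq
    have h3 := hWd i
    have : 1 / (m:ℝ) < δ := by
      have : 2/(m:ℝ) = 2 * (1/m) := by ring
      nlinarith [hmR]
    linarith
  obtain ⟨i0, hai0⟩ := Set.mem_iUnion.mp (hcov haE)
  obtain ⟨i1, hbi1⟩ := Set.mem_iUnion.mp (hcov hbE)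
  -- α sending position 1 to i1, rest to i0
  obtain ⟨x, hxE, hx⟩ := hα (fun j => if j.val = 1 then i1 else i0)
  have hx0 := hx ⟨0, by omega⟩
  have hxa : x = a := by
    have : x ∈ W i0 := by simpa using hx0
    exact huniq i0 x a hxE haE this hai0
  have hx1 := hx ⟨1, by omega⟩
  simp only [one_mul] at hx1
  have hTx1 : T^[n'] a ∈ W i1 := by rw [← hxa]; simpa using hx1
  obtain ⟨y, hyE, hy⟩ := hα (fun _ => i0)
  have hy0 := hy ⟨0, by omega⟩
  have hya : y = a := by
    have : y ∈ W i0 := by simpa using hy0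
    exact huniq i0 y a hyE haE this hai0
  have hy1 := hy ⟨1, by omega⟩
  simp only [one_mul] at hy1
  have hTy1 : T^[n'] a ∈ W i0 := by rw [← hya]; simpa using hy1
  -- contradiction
  have d1 : dist a (T^[n'] a) ≤ Metric.diam (W i0) :=
    Metric.dist_le_diam_of_mem (bounded_all _) hai0 hTy1
  have d2 : dist (T^[n'] a) b ≤ Metric.diam (W i1) :=
    Metric.dist_le_diam_of_mem (bounded_all _) hTx1 hbi1
  have d3 : dist a b ≤ dist a (T^[n'] a) + dist (T^[n'] a) b := dist_triangle _ _ _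
  have d4 := hδle a haE b hbE hab
  have d5 := hWd i0
  have d6 := hWd i1
  have : 2 / (m:ℝ) = 1/m + 1/m := by ring
  linarith

/-- Backward direction. -/
lemma deltaWM_of_mem_Am (E : NonemptyCompacts X)
    (h : ∀ m : ℕ, 1 ≤ m → E ∈ Am T m) : DeltaWM T (E : Set X) := by
  classical
  refine ⟨(h 1 le_rfl).1, ?_⟩
  intro n d hn hd U hUo hUne
  choose y hy using hUne
  have hball : ∀ i j, ∃ ε > 0, Metric.ball (y i j) ε ⊆ U i j :=
    fun i j => Metric.isOpen_iff.mp (hUo i j) _ (hy i j).1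
  choose ε hεpos hεsub using hball
  haveI : Nonempty (Fin n) := ⟨⟨0, by omega⟩⟩
  haveI : Nonempty (Fin d) := ⟨⟨0, by omega⟩⟩
  set ε0 : ℝ := Finset.univ.inf' Finset.univ_nonempty
    (fun p : Fin n × Fin d => ε p.1 p.2) with hε0_def
  have hε0pos : 0 < ε0 := by
    rw [hε0_def, Finset.lt_inf'_iff]
    exact fun p _ => hεpos p.1 p.2
  have hε0le : ∀ i j, ε0 ≤ ε i j := fun i j =>
    Finset.inf'_le _ (Finset.mem_univ (i, j))
  -- separated points
  have hinf : (E : Set X).Infinite := infinite_of_mem_Am T E h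
  obtain ⟨t, htE, htc⟩ := hinf.exists_subset_card_eq d
  have htnt : ∃ a ∈ t, ∃ b ∈ t, a ≠ b := Finset.one_lt_card.mp (by omega)
  obtain ⟨a, hat, b, hbt, hab⟩ := htnt
  set P := (t ×ˢ t).filter (fun pq => pq.1 ≠ pq.2) with hP_def
  have hP : P.Nonempty := ⟨(a, b), by simp [hP_def, hat, hbt, hab]⟩
  set δ : ℝ := P.inf' hP (fun pq => dist pq.1 pq.2) with hδ_def
  have hδpos : 0 < δ := by
    rw [hδ_def, Finset.lt_inf'_iff]
    intro pq hpq
    simp only [hP_def, Finset.mem_filter] at hpq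
    exact dist_pos.mpr hpq.2
  have hδle : ∀ p ∈ t, ∀ q ∈ t, p ≠ q → δ ≤ dist p q := by
    intro p hp q hq hpq
    exact Finset.inf'_le (fun pq => dist pq.1 pq.2)
      (show (p, q) ∈ P by simp [hP_def, hp, hq, hpq])
  -- choose m
  obtain ⟨m, hm⟩ := exists_nat_gt (max (1 / ε0) (1 / δ))
  have hmax_pos : 0 < max (1 / ε0) (1 / δ) := lt_max_of_lt_left (by positivity)
  have hm1 : 1 ≤ m := Nat.cast_pos.mp (lt_trans hmax_pos hm)
  have hmR : (0:ℝ) < m := by exact_mod_cast hm1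
  have hmε : 1 / (m:ℝ) < ε0 := by
    have h1 : 1 / ε0 < m := lt_of_le_of_lt (le_max_left _ _) hm
    rw [div_lt_iff₀ hε0pos] at h1
    rw [div_lt_iff₀ hmR]
    linarith
  have hmδ : 1 / (m:ℝ) < δ := by
    have h1 : 1 / δ < m := lt_of_le_of_lt (le_max_right _ _) hm
    rw [div_lt_iff₀ hδpos] at h1
    rw [div_lt_iff₀ hmR]
    linarith
  obtain ⟨hnt, k, hk2, W, hWo, hWd, hcov, n', hn'1, hα⟩ := h m hm1
  -- d ≤ k via separated points
  set p : Fin d → X := fun j =>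
    ((Fintype.equivFinOfCardEq (by rw [Fintype.card_coe]; exact htc)).symm j : t) with hp_def
  have hpt : ∀ j, p j ∈ t := fun j => Finset.coe_mem _
  have hpinj : Function.Injective p := fun j j' hjj' => by
    have := Subtype.coe_injective hjj'
    exact (Fintype.equivFinOfCardEq _).symm.injective this
  have hpW : ∀ j, ∃ i, p j ∈ W i := fun j =>
    Set.mem_iUnion.mp (hcov (htE (hpt j)))
  choose cp hcp using hpW
  have hcpinj : Function.Injective cp := by
    intro j j' hjj'
    by_contra hne
    have hpne : p j ≠ p j' := fun hcon => hne (hpinj hcon)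
    have h1 := hδle _ (hpt j) _ (hpt j') hpne
    have h2 : dist (p j) (p j') ≤ Metric.diam (W (cp j)) :=
      Metric.dist_le_diam_of_mem (bounded_all _) (hcp j) (hjj' ▸ hcp j')
    have h3 := hWd (cp j)
    linarith
  have hdk : d ≤ k := by
    have := Fintype.card_le_of_injective cp hcpinj
    simpa using this
  -- indices of the y's
  have hyW : ∀ i j, ∃ idx, y i j ∈ W idx := fun i j =>
    Set.mem_iUnion.mp (hcov (hy i j).2)
  choose c hc using hyW
  refine ⟨n', hn'1, fun i => ?_⟩
  obtain ⟨x, hxE, hx⟩ := hα (fun j =>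
    if hj : j.val < d then c i ⟨j.val, hj⟩ else c i ⟨0, by omega⟩)
  refine ⟨x, hxE, fun j => ?_⟩
  have hjk : j.val < k := lt_of_lt_of_le j.2 hdk
  have h1 := hx ⟨j.val, hjk⟩
  simp only [j.2, dif_pos, Fin.eta] at h1
  -- h1 : T^[j.val * n'] x ∈ W (c i j)
  apply hεsub i j
  have h2 : dist (T^[j.val * n'] x) (y i j) ≤ Metric.diam (W (c i j)) :=
    Metric.dist_le_diam_of_mem (bounded_all _) h1 (hc i j)
  have h3 := hWd (c i j)
  have h4 := hε0le i j
  exact Metric.mem_ball.mpr (by linarith)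

/-- `Am T m` is open in the hyperspace. -/
lemma isOpen_Am (hT : Continuous T) (m : ℕ) : IsOpen (Am T m) := by
  rw [Metric.isOpen_iff]
  rintro E ⟨hnt, k, hk2, W, hWo, hWd, hcov, n', hn'1, hα⟩
  obtain ⟨a, haE, b, hbE, hab⟩ := hnt
  obtain ⟨ε2, hε2pos, hthick⟩ := E.isCompact.exists_thickening_subset_open
    (isOpen_iUnion hWo) hcov
  choose xα hxαE hxα using hα
  have hVα : ∀ α : Fin k → Fin k, ∃ ε > 0, ∀ z, dist z (xα α) < ε →
      ∀ j : Fin k, T^[j.val * n'] z ∈ W (α j) := by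
    intro α
    have hopen : IsOpen (⋂ j : Fin k, T^[j.val * n'] ⁻¹' W (α j)) :=
      isOpen_iInter_of_finite fun j => (hWo _).preimage (hT.iterate _)
    have hmem : xα α ∈ ⋂ j : Fin k, T^[j.val * n'] ⁻¹' W (α j) :=
      Set.mem_iInter.mpr (hxα α)
    obtain ⟨ε, hε, hsub⟩ := Metric.isOpen_iff.mp hopen _ hmem
    exact ⟨ε, hε, fun z hz => Set.mem_iInter.mp (hsub (Metric.mem_ball.mpr hz))⟩
  choose εα hεαpos hεα using hVα
  haveI : Nonempty (Fin k) := ⟨⟨0, by omega⟩⟩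
  set ε4 : ℝ := Finset.univ.inf' Finset.univ_nonempty εα with hε4_def
  have hε4pos : 0 < ε4 := by
    rw [hε4_def, Finset.lt_inf'_iff]; exact fun α _ => hεαpos α
  have hε4le : ∀ α, ε4 ≤ εα α := fun α => Finset.inf'_le _ (Finset.mem_univ α)
  set ε : ℝ := min (min (dist a b / 2) ε2) ε4 with hε_def
  have hεpos : 0 < ε := by
    have : 0 < dist a b := dist_pos.mpr hab
    simp only [hε_def, lt_min_iff]
    exact ⟨⟨by linarith, hε2pos⟩, hε4pos⟩
  refine ⟨ε, hεpos, fun F hF => ?_⟩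
  rw [Metric.mem_ball, Metric.NonemptyCompacts.dist_eq] at hF
  have hne : EMetric.hausdorffEdist (F : Set X) (E : Set X) ≠ ⊤ :=
    Metric.hausdorffEdist_ne_top_of_nonempty_of_bounded F.nonempty E.nonempty
      (bounded_all _) (bounded_all _)
  -- nontriviality of F
  obtain ⟨a', ha'F, ha'⟩ := Metric.exists_dist_lt_of_hausdorffDist_lt' haE hF hne
  obtain ⟨b', hb'F, hb'⟩ := Metric.exists_dist_lt_of_hausdorffDist_lt' hbE hF hne
  have hε_ab : ε ≤ dist a b / 2 := le_trans (min_le_left _ _) (min_le_left _ _)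
  have hε_2 : ε ≤ ε2 := le_trans (min_le_left _ _) (min_le_right _ _)
  have hε_4 : ε ≤ ε4 := min_le_right _ _
  have ha'b' : a' ≠ b' := by
    intro hcon
    rw [hcon] at ha'
    have h1 : dist a b ≤ dist a b' + dist b' b := dist_triangle _ _ _
    rw [dist_comm a b'] at h1
    linarith
  refine ⟨⟨a', ha'F, b', hb'F, ha'b'⟩, k, hk2, W, hWo, hWd, ?_, n', hn'1, ?_⟩
  · -- F ⊆ ⋃ W
    intro z hz
    obtain ⟨w, hwE, hzw⟩ := Metric.exists_dist_lt_of_hausdorffDist_lt hz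
      (lt_of_lt_of_le hF hε_2) hne
    exact hthick (Metric.mem_thickening_iff.mpr ⟨w, hwE, hzw⟩)
  · -- the α condition for F
    intro α
    obtain ⟨x', hx'F, hx'⟩ := Metric.exists_dist_lt_of_hausdorffDist_lt'
      (hxαE α) (lt_of_lt_of_le hF (hε_4.trans (hε4le α))) hne
    exact ⟨x', hx'F, hεα α x' hx'⟩

end Aux

theorem stmt8 {X : Type*} [MetricSpace X] [CompactSpace X] (T : X → X)
    (hT : Continuous T) :
    {E : NonemptyCompacts X | DeltaWM T (E : Set X)} = (⋂ m ∈ Set.Ici 1, Am T m) ∧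
    IsGδ {E : NonemptyCompacts X | DeltaWM T (E : Set X)} := by
  have heq : {E : NonemptyCompacts X | DeltaWM T (E : Set X)} = ⋂ m ∈ Set.Ici 1, Am T m := by
    ext E
    simp only [Set.mem_setOf_eq, Set.mem_iInter, Set.mem_Ici]
    exact ⟨fun h m hm => deltaWM_mem_Am T E h m hm,
      fun h => deltaWM_of_mem_Am T E h⟩
  refine ⟨heq, ?_⟩
  rw [heq]
  exact IsGδ.biInter (Set.to_countable _) fun m _ => (isOpen_Am T hT m).isGδ
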